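/- arXiv:2406.00846 — 2 statements merged into one kernel-verified Lean document; each statement's English description precedes it below -/
import Mathlib

section
/- Let f_m: R^d → R for m = 1,...,M be L-smooth convex functions with f = (1/M)∑_m f_m, and D a diagonal matrix with αI ⪯ D. Then for any points x_1,...,x_M with mean x̂ and any minimizer x_* of f, (1/M)∑_{m=1}^M ||∇f_m(x_m)||_{D^{-1}}^2 ≤ (3L^2/(Mα))∑_{m=1}^M ||x_m - x̂||^2 + (6L/α)(f(x̂) - f(x_*)) + (3/(Mα))∑_{m=1}^M ||∇f_m(x_*)||^2. -/
open InnerProductSpace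

section Aux
variable {E : Type*} [NormedAddCommGroup E] [InnerProductSpace ℝ E] [CompleteSpace E]
local notation "⟪" x ", " y "⟫" => @inner ℝ _ _ x y

/-- derivative along a line -/
lemma line_hasDerivAt (h : E → ℝ) (G : E → E) (hg : ∀ z, HasGradientAt h (G z) z)
    (a v : E) (t : ℝ) :
    HasDerivAt (fun s : ℝ => h (a + s • v)) ⟪G (a + t • v), v⟫ t := by
  have h1 : HasDerivAt (fun s : ℝ => a + s • v) v t := by
    simpa using ((hasDerivAt_id t).smul_const v).const_add a
  have h2 : HasFDerivAt h (toDual ℝ E (G (a + t • v))) (a + t • v) := hg _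
  have h3 := h2.comp_hasDerivAt t h1
  simp at h3
  exact h3

/-- first-order condition for convexity -/
lemma grad_lower_bound (h : E → ℝ) (G : E → E) (hconv : ConvexOn ℝ Set.univ h)
    (hg : ∀ z, HasGradientAt h (G z) z) (a b : E) :
    h a + ⟪G a, b - a⟫ ≤ h b := by
  rcases eq_or_ne b a with rfl | hne
  · simp
  have hφ : ConvexOn ℝ Set.univ (fun t : ℝ => h (a + t • (b - a))) := by
    have := hconv.comp_affineMap (AffineMap.lineMap a b : ℝ →ᵃ[ℝ] E)
    simp only [Set.preimage_univ] at this
    have e : (fun t : ℝ => h (a + t • (b - a))) = h ∘ AffineMap.lineMap a b := by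
      funext t
      simp only [Function.comp_apply, AffineMap.lineMap_apply, vsub_eq_sub, vadd_eq_add]
      rw [add_comm]
    rw [e]; exact this
  have hd : HasDerivAt (fun t : ℝ => h (a + t • (b - a))) ⟪G a, b - a⟫ 0 := by
    simpa using line_hasDerivAt h G hg a (b - a) 0
  have := hφ.le_slope_of_hasDerivAt (Set.mem_univ (0:ℝ)) (Set.mem_univ (1:ℝ)) one_pos hd
  simp [slope_def_field] at this
  simpa using by linarith [this]

/-- descent lemma -/
lemma descent_lemma (h : E → ℝ) (G : E → E) (L : ℝ) (hL : 0 ≤ L)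
    (hg : ∀ z, HasGradientAt h (G z) z)
    (hLip : ∀ x y, ‖G x - G y‖ ≤ L * ‖x - y‖) (a b : E) :
    h b ≤ h a + ⟪G a, b - a⟫ + L / 2 * ‖b - a‖ ^ 2 := by
  set v := b - a with hv
  set ψ : ℝ → ℝ := fun t => h (a + t • v) - t * ⟪G a, v⟫ - L * t ^ 2 / 2 * ‖v‖ ^ 2 with hψ
  have hder : ∀ t : ℝ, HasDerivAt ψ
      (⟪G (a + t • v), v⟫ - ⟪G a, v⟫ - L * t * ‖v‖ ^ 2) t := by
    intro t
    have h1 := line_hasDerivAt h G hg a v t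
    have h2 : HasDerivAt (fun t : ℝ => t * ⟪G a, v⟫) ⟪G a, v⟫ t := by
      simpa using (hasDerivAt_id t).mul_const ⟪G a, v⟫
    have h3 : HasDerivAt (fun t : ℝ => L * t ^ 2 / 2 * ‖v‖ ^ 2) (L * t * ‖v‖ ^ 2) t := by
      have : HasDerivAt (fun t : ℝ => t ^ 2) (2 * t) t := by
        simpa using hasDerivAt_pow 2 t
      have := ((this.const_mul L).div_const 2).mul_const (‖v‖ ^ 2)
      rw [show L * t * ‖v‖ ^ 2 = L * (2 * t) / 2 * ‖v‖ ^ 2 by ring]; exact this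
    exact (h1.sub h2).sub h3
  have hderiv_nonpos : ∀ t ∈ Set.Ioo (0:ℝ) 1, deriv ψ t ≤ 0 := by
    intro t ht
    rw [(hder t).deriv]
    have h1 : ⟪G (a + t • v) - G a, v⟫ ≤ L * t * ‖v‖ ^ 2 := by
      calc ⟪G (a + t • v) - G a, v⟫ ≤ ‖G (a + t • v) - G a‖ * ‖v‖ :=
            real_inner_le_norm _ _
        _ ≤ (L * ‖(a + t • v) - a‖) * ‖v‖ := by
            apply mul_le_mul_of_nonneg_right (hLip _ _) (norm_nonneg _)
        _ = L * t * ‖v‖ ^ 2 := by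
            simp [norm_smul, abs_of_pos ht.1]; ring
    rw [inner_sub_left] at h1
    linarith
  have hcont : ContinuousOn ψ (Set.Icc 0 1) := fun t _ =>
    (hder t).continuousAt.continuousWithinAt
  have hanti := antitoneOn_of_deriv_nonpos (convex_Icc (0:ℝ) 1) hcont
    (fun t ht => ((hder t).differentiableAt.differentiableWithinAt))
    (by simpa [interior_Icc] using hderiv_nonpos)
  have key : ψ 1 ≤ ψ 0 := hanti (Set.left_mem_Icc.2 zero_le_one)
    (Set.right_mem_Icc.2 zero_le_one) zero_le_one
  simp only [hψ, one_smul, zero_smul, add_zero, one_pow, zero_pow, mul_zero,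
    mul_one, zero_mul, sub_zero, one_mul] at key
  have : a + v = b := by simp [hv]
  rw [this] at key
  linarith

/-- co-coercivity / Bregman bound -/
lemma grad_sq_le_bregman (h : E → ℝ) (G : E → E) (L : ℝ) (hL : 0 < L)
    (hconv : ConvexOn ℝ Set.univ h)
    (hg : ∀ z, HasGradientAt h (G z) z)
    (hLip : ∀ x y, ‖G x - G y‖ ≤ L * ‖x - y‖) (a b : E) :
    ‖G b - G a‖ ^ 2 ≤ 2 * L * (h b - h a - ⟪G a, b - a⟫) := by
  set w := G b - G a with hw
  set z := b - (1 / L) • w with hz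
  have h1 : h z ≤ h b + ⟪G b, z - b⟫ + L / 2 * ‖z - b‖ ^ 2 :=
    descent_lemma h G L hL.le hg hLip b z
  have h2 : h a + ⟪G a, z - a⟫ ≤ h z := grad_lower_bound h G hconv hg a z
  have hzb : z - b = -((1 / L) • w) := by rw [hz]; abel
  have e1 : ⟪G b, z - b⟫ = -(1 / L) * ⟪G b, w⟫ := by
    rw [hzb, inner_neg_right, real_inner_smul_right]; ring
  have e2 : ‖z - b‖ ^ 2 = (1 / L) ^ 2 * ‖w‖ ^ 2 := by
    rw [hzb, norm_neg, norm_smul]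
    simp [abs_of_pos (by positivity : (0:ℝ) < 1 / L), mul_pow]
  have e3 : ⟪G a, z - a⟫ = ⟪G a, b - a⟫ - (1 / L) * ⟪G a, w⟫ := by
    have : z - a = (b - a) - (1 / L) • w := by rw [hz]; abel
    rw [this, inner_sub_right, real_inner_smul_right]
  have e4 : ⟪G b, w⟫ - ⟪G a, w⟫ = ‖w‖ ^ 2 := by
    rw [← inner_sub_left, ← hw, real_inner_self_eq_norm_sq]
  rw [e1, e2] at h1
  rw [e3] at h2
  have hL' : (0:ℝ) < 1 / L := by positivity
  have this2 := h2.trans h1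
  have e5 : ⟪G b, w⟫ = ⟪G a, w⟫ + ‖w‖ ^ 2 := by linarith [e4]
  rw [e5] at this2
  have hL0 : L ≠ 0 := ne_of_gt hL
  have c1 : L / 2 * ((1 / L) ^ 2 * ‖w‖ ^ 2) = 1 / (2 * L) * ‖w‖ ^ 2 := by
    field_simp
  have c2 : -(1 / L) * (⟪G a, w⟫ + ‖w‖ ^ 2) = -(1 / L) * ⟪G a, w⟫ - 1 / L * ‖w‖ ^ 2 := by
    ring
  rw [c1, c2] at this2
  have e7 : 1 / L * ‖w‖ ^ 2 - 1 / (2 * L) * ‖w‖ ^ 2 = 1 / (2 * L) * ‖w‖ ^ 2 := by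
    field_simp; ring
  have key : 1 / (2 * L) * ‖w‖ ^ 2 ≤ h b - h a - ⟪G a, b - a⟫ := by linarith
  have c3 : 2 * L * (1 / (2 * L) * ‖w‖ ^ 2) = ‖w‖ ^ 2 := by field_simp
  have := mul_le_mul_of_nonneg_left key (by positivity : (0:ℝ) ≤ 2 * L)
  linarith


/-- Average gradient bound: for `L`-smooth convex `f_m` with gradients `g_m`,
`f = (1/M)∑ f_m` with minimizer `x_*`, and a diagonal matrix `D ⪰ αI`,
`(1/M)∑ ‖∇f_m(x_m)‖_{D⁻¹}² ≤ (3L²/(Mα))∑ ‖x_m - x̂‖² + (6L/α)(f(x̂) - f(x_*))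
  + (3/(Mα))∑ ‖∇f_m(x_*)‖²`. -/
theorem average_gradient_bound {d M : ℕ} (hM : 0 < M)
    (f : Fin M → EuclideanSpace ℝ (Fin d) → ℝ)
    (g : Fin M → EuclideanSpace ℝ (Fin d) → EuclideanSpace ℝ (Fin d))
    (L α : ℝ) (hα : 0 < α)
    (hconv : ∀ m, ConvexOn ℝ Set.univ (f m))
    (hgrad : ∀ m x, HasGradientAt (f m) (g m x) x)
    (hLip : ∀ m x y, ‖g m x - g m y‖ ≤ L * ‖x - y‖)
    (D : Fin d → ℝ) (hD : ∀ i, α ≤ D i)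
    (x : Fin M → EuclideanSpace ℝ (Fin d)) (xstar : EuclideanSpace ℝ (Fin d))
    (hmin : ∀ z, (M : ℝ)⁻¹ * ∑ m, f m xstar ≤ (M : ℝ)⁻¹ * ∑ m, f m z) :
    (M : ℝ)⁻¹ * ∑ m, ∑ i, (D i)⁻¹ * ((g m (x m)) i) ^ 2 ≤
      3 * L ^ 2 / (M * α) * ∑ m, ‖x m - (M : ℝ)⁻¹ • ∑ j, x j‖ ^ 2
        + 6 * L / α * ((M : ℝ)⁻¹ * ∑ m, f m ((M : ℝ)⁻¹ • ∑ j, x j)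
            - (M : ℝ)⁻¹ * ∑ m, f m xstar)
        + 3 / (M * α) * ∑ m, ‖g m xstar‖ ^ 2 := by
  classical
  have hM' : (0:ℝ) < M := Nat.cast_pos.2 hM
  set xh : EuclideanSpace ℝ (Fin d) := (M : ℝ)⁻¹ • ∑ j, x j with hxh
  -- Step 1: the sum of gradients at the minimizer vanishes
  have hgradsum : ∑ m, g m xstar = 0 := by
    have h1 : HasFDerivAt (fun z => ∑ m, f m z)
        (∑ m, (toDual ℝ (EuclideanSpace ℝ (Fin d)) (g m xstar) :
          EuclideanSpace ℝ (Fin d) →L[ℝ] ℝ)) xstar :=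
      HasFDerivAt.fun_sum (fun m _ => hgrad m xstar)
    have hF : HasFDerivAt (fun z => (M:ℝ)⁻¹ * ∑ m, f m z)
        ((M:ℝ)⁻¹ • ∑ m, (toDual ℝ (EuclideanSpace ℝ (Fin d)) (g m xstar) :
          EuclideanSpace ℝ (Fin d) →L[ℝ] ℝ)) xstar := h1.const_mul _
    have hloc : IsLocalMin (fun z => (M:ℝ)⁻¹ * ∑ m, f m z) xstar :=
      Filter.Eventually.of_forall hmin
    have hzero := hloc.hasFDerivAt_eq_zero hF
    have h2 : ∑ m, (toDual ℝ (EuclideanSpace ℝ (Fin d)) (g m xstar) :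
        EuclideanSpace ℝ (Fin d) →L[ℝ] ℝ) = 0 := by
      rcases smul_eq_zero.1 hzero with h | h
      · exact absurd h (by positivity)
      · exact h
    have h3 : toDual ℝ (EuclideanSpace ℝ (Fin d)) (∑ m, g m xstar) = 0 := by
      rw [map_sum]; exact h2
    exact (map_eq_zero_iff _ (toDual ℝ (EuclideanSpace ℝ (Fin d))).injective).1 h3
  have hinnersum : ∀ v : EuclideanSpace ℝ (Fin d),
      ∑ m, (inner ℝ (g m xstar) v : ℝ) = 0 := by
    intro v
    rw [← sum_inner, hgradsum, inner_zero_left]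
  -- Step 2: D⁻¹-norm bounded by α⁻¹ times squared norm
  have hnormsq : ∀ v : EuclideanSpace ℝ (Fin d), ‖v‖ ^ 2 = ∑ i, (v i) ^ 2 := by
    intro v
    rw [EuclideanSpace.norm_eq, Real.sq_sqrt (by positivity)]
    simp [sq_abs]
  have step2 : ∀ m, ∑ i, (D i)⁻¹ * ((g m (x m)) i) ^ 2 ≤ α⁻¹ * ‖g m (x m)‖ ^ 2 := by
    intro m
    rw [hnormsq, Finset.mul_sum]
    refine Finset.sum_le_sum fun i _ => ?_
    exact mul_le_mul_of_nonneg_right (inv_anti₀ hα (hD i)) (sq_nonneg _)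
  -- Step 3+4: pointwise triple decomposition
  have step34 : ∀ m, ‖g m (x m)‖ ^ 2 ≤
      3 * L ^ 2 * ‖x m - xh‖ ^ 2 + 3 * ‖g m xh - g m xstar‖ ^ 2
        + 3 * ‖g m xstar‖ ^ 2 := by
    intro m
    have hdecomp : g m (x m) =
        (g m (x m) - g m xh) + (g m xh - g m xstar) + g m xstar := by abel
    have htri : ‖g m (x m)‖ ≤ ‖g m (x m) - g m xh‖ + ‖g m xh - g m xstar‖
        + ‖g m xstar‖ := by
      have h0 : ‖(g m (x m) - g m xh) + (g m xh - g m xstar) + g m xstar‖ ≤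
          ‖g m (x m) - g m xh‖ + ‖g m xh - g m xstar‖ + ‖g m xstar‖ :=
        (norm_add_le _ _).trans (add_le_add (norm_add_le _ _) le_rfl)
      rwa [← hdecomp] at h0
    have h4 : ‖g m (x m) - g m xh‖ ^ 2 ≤ L ^ 2 * ‖x m - xh‖ ^ 2 := by
      have h := hLip m (x m) xh
      nlinarith [norm_nonneg (g m (x m) - g m xh), norm_nonneg (x m - xh)]
    nlinarith [norm_nonneg (g m (x m) - g m xh), norm_nonneg (g m xh - g m xstar),
      norm_nonneg (g m xstar), norm_nonneg (g m (x m)), sq_nonneg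
      (‖g m (x m) - g m xh‖ - ‖g m xh - g m xstar‖), sq_nonneg
      (‖g m (x m) - g m xh‖ - ‖g m xstar‖), sq_nonneg
      (‖g m xh - g m xstar‖ - ‖g m xstar‖), htri, h4]
  -- Step 5: Bregman bound for the middle term, summed
  have step5 : ∑ m, ‖g m xh - g m xstar‖ ^ 2 ≤
      2 * L * (∑ m, f m xh - ∑ m, f m xstar) := by
    rcases lt_or_ge 0 L with hLpos | hLnonpos
    · have hb : ∀ m, ‖g m xh - g m xstar‖ ^ 2 ≤
          2 * L * (f m xh - f m xstar - (inner ℝ (g m xstar) (xh - xstar) : ℝ)) :=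
        fun m => grad_sq_le_bregman (f m) (g m) L hLpos (hconv m) (hgrad m)
          (hLip m) xstar xh
      calc ∑ m, ‖g m xh - g m xstar‖ ^ 2
          ≤ ∑ m, 2 * L * (f m xh - f m xstar - (inner ℝ (g m xstar) (xh - xstar) : ℝ)) :=
            Finset.sum_le_sum fun m _ => hb m
        _ = 2 * L * (∑ m, f m xh - ∑ m, f m xstar) := by
            rw [← Finset.mul_sum, Finset.sum_sub_distrib, Finset.sum_sub_distrib,
              hinnersum]
            ring
    · have hgeq : ∀ m, g m xh = g m xstar := by
        intro m
        have h := hLip m xh xstar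
        have : ‖g m xh - g m xstar‖ ≤ 0 :=
          h.trans (mul_nonpos_of_nonpos_of_nonneg hLnonpos (norm_nonneg _))
        exact sub_eq_zero.1 (norm_eq_zero.1 (le_antisymm this (norm_nonneg _)))
      have key : ∀ m, f m xh - f m xstar = (inner ℝ (g m xstar) (xh - xstar) : ℝ) := by
        intro m
        have h1 := grad_lower_bound (f m) (g m) (hconv m) (hgrad m) xstar xh
        have h2 := grad_lower_bound (f m) (g m) (hconv m) (hgrad m) xh xstar
        rw [hgeq m] at h2
        have e : (inner ℝ (g m xstar) (xstar - xh) : ℝ) =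
            -(inner ℝ (g m xstar) (xh - xstar) : ℝ) := by
          rw [← inner_neg_right]; congr 1; abel
        rw [e] at h2
        linarith
      have hz : ∀ m : Fin M, ‖g m xh - g m xstar‖ ^ 2 = 0 := fun m => by
        rw [hgeq m]; simp
      rw [Finset.sum_congr rfl (fun m _ => hz m)]
      have hfz : ∑ m, f m xh - ∑ m, f m xstar = 0 := by
        rw [← Finset.sum_sub_distrib, Finset.sum_congr rfl (fun m _ => key m),
          hinnersum]
      rw [hfz]
      simp
  -- assemble
  have hα0 : α ≠ 0 := ne_of_gt hα
  have hM0 : (M:ℝ) ≠ 0 := ne_of_gt hM'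
  have hsum1 : ∑ m, ∑ i, (D i)⁻¹ * ((g m (x m)) i) ^ 2 ≤
      α⁻¹ * ∑ m, ‖g m (x m)‖ ^ 2 := by
    rw [Finset.mul_sum]; exact Finset.sum_le_sum fun m _ => step2 m
  have hsum2 : ∑ m, ‖g m (x m)‖ ^ 2 ≤
      3 * L ^ 2 * ∑ m, ‖x m - xh‖ ^ 2 + 6 * L * (∑ m, f m xh - ∑ m, f m xstar)
        + 3 * ∑ m, ‖g m xstar‖ ^ 2 := by
    have hc : ∑ m, ‖g m (x m)‖ ^ 2 ≤
        3 * L ^ 2 * ∑ m, ‖x m - xh‖ ^ 2 + 3 * ∑ m, ‖g m xh - g m xstar‖ ^ 2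
          + 3 * ∑ m, ‖g m xstar‖ ^ 2 := by
      calc ∑ m, ‖g m (x m)‖ ^ 2
          ≤ ∑ m, (3 * L ^ 2 * ‖x m - xh‖ ^ 2 + 3 * ‖g m xh - g m xstar‖ ^ 2
              + 3 * ‖g m xstar‖ ^ 2) := Finset.sum_le_sum fun m _ => step34 m
        _ = _ := by
            rw [Finset.sum_add_distrib, Finset.sum_add_distrib, ← Finset.mul_sum,
              ← Finset.mul_sum, ← Finset.mul_sum]
    linarith [step5]
  calc (M : ℝ)⁻¹ * ∑ m, ∑ i, (D i)⁻¹ * ((g m (x m)) i) ^ 2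
      ≤ (M : ℝ)⁻¹ * (α⁻¹ * ∑ m, ‖g m (x m)‖ ^ 2) :=
        mul_le_mul_of_nonneg_left hsum1 (by positivity)
    _ ≤ (M : ℝ)⁻¹ * (α⁻¹ * (3 * L ^ 2 * ∑ m, ‖x m - xh‖ ^ 2
          + 6 * L * (∑ m, f m xh - ∑ m, f m xstar)
          + 3 * ∑ m, ‖g m xstar‖ ^ 2)) :=
        mul_le_mul_of_nonneg_left
          (mul_le_mul_of_nonneg_left hsum2 (by positivity)) (by positivity)
    _ = 3 * L ^ 2 / (M * α) * ∑ m, ‖x m - xh‖ ^ 2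
          + 6 * L / α * ((M : ℝ)⁻¹ * ∑ m, f m xh - (M : ℝ)⁻¹ * ∑ m, f m xstar)
          + 3 / (M * α) * ∑ m, ‖g m xstar‖ ^ 2 := by
        field_simp

end Aux
end

section
/- Let f: R^d → R be L-smooth and μ-strongly convex with minimizer x_*, let D be diagonal with αI ⪯ D ⪯ ΓI (0 < α ≤ Γ), and let γ satisfy 0 < γ ≤ α/(4L). Then for any x ∈ R^d, ||x - x_* - γD^{-1}∇f(x)||_D^2 ≤ (1 - γμ/Γ)||x - x_*||_D^2 - (γ/2)(f(x) - f(x_*)). -/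
set_option maxHeartbeats 1000000 in
/-- One-step contraction of scaled gradient descent: for `f` `μ`-strongly convex and
`L`-smooth with gradient `g`, minimizer `x_*` (so `g(x_*) = 0`), a diagonal matrix `D`
with `αI ⪯ D ⪯ ΓI`, and `0 < γ ≤ α/(4L)`:
`‖x - x_* - γD⁻¹∇f(x)‖_D² ≤ (1 - γμ/Γ)‖x - x_*‖_D² - (γ/2)(f(x) - f(x_*))`. -/
theorem scaled_descent_step {d : ℕ}
    (f : EuclideanSpace ℝ (Fin d) → ℝ)
    (g : EuclideanSpace ℝ (Fin d) → EuclideanSpace ℝ (Fin d))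
    (L μ α Γ γ : ℝ) (hL : 0 < L) (hμ : 0 ≤ μ) (hα : 0 < α) (hαΓ : α ≤ Γ)
    (hsc : ∀ x y, f x + (inner ℝ (g x) (y - x) : ℝ) + μ / 2 * ‖y - x‖ ^ 2 ≤ f y)
    (hsm : ∀ x y, f x ≤ f y + (inner ℝ (g y) (x - y) : ℝ) + L / 2 * ‖x - y‖ ^ 2)
    (xstar : EuclideanSpace ℝ (Fin d)) (hmin : ∀ z, f xstar ≤ f z)
    (hgstar : g xstar = 0)
    (D : Fin d → ℝ) (hD : ∀ i, α ≤ D i ∧ D i ≤ Γ)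
    (hγ0 : 0 < γ) (hγ : γ ≤ α / (4 * L))
    (x : EuclideanSpace ℝ (Fin d)) :
    ∑ i, D i *
        ((x - xstar -
            γ • (show EuclideanSpace ℝ (Fin d) from WithLp.toLp 2 (fun i => (D i)⁻¹ * g x i))) i) ^ 2 ≤
      (1 - γ * μ / Γ) * ∑ i, D i * ((x - xstar) i) ^ 2
        - γ / 2 * (f x - f xstar) := by
  have hΓ : (0:ℝ) < Γ := hα.trans_le hαΓ
  have hDpos : ∀ i, 0 < D i := fun i => lt_of_lt_of_le hα (hD i).1
  have hΔ : 0 ≤ f x - f xstar := sub_nonneg.2 (hmin x)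
  set v : EuclideanSpace ℝ (Fin d) := x - xstar with hv
  have hnormsq : ∀ w : EuclideanSpace ℝ (Fin d), ‖w‖ ^ 2 = ∑ i, (w i) ^ 2 := by
    intro w
    rw [← real_inner_self_eq_norm_sq]
    simp only [PiLp.inner_apply, RCLike.inner_apply, conj_trivial]
    exact Finset.sum_congr rfl fun i _ => by ring
  set S := ∑ i, D i * (v i) ^ 2 with hS
  set P := ∑ i, g x i * v i with hP
  set N := ∑ i, (g x i) ^ 2 with hN
  set Q := ∑ i, (D i)⁻¹ * (g x i) ^ 2 with hQ
  set nv := ∑ i, (v i) ^ 2 with hnv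
  -- expand LHS
  have expand : ∑ i, D i *
        ((x - xstar -
            γ • (show EuclideanSpace ℝ (Fin d) from WithLp.toLp 2 (fun i => (D i)⁻¹ * g x i))) i) ^ 2
      = S - 2*γ*P + γ^2 * Q := by
    rw [hS, hP, hQ, Finset.mul_sum, Finset.mul_sum, ← Finset.sum_sub_distrib,
      ← Finset.sum_add_distrib]
    refine Finset.sum_congr rfl fun i _ => ?_
    have hne : D i ≠ 0 := (hDpos i).ne'
    simp only [PiLp.sub_apply, PiLp.smul_apply, PiLp.toLp_apply, smul_eq_mul, ← hv]
    field_simp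
    ring
  rw [expand]
  -- (1) strong convexity
  have h1 : f x - f xstar + μ/2 * nv ≤ P := by
    have := hsc x xstar
    have hneg : xstar - x = -v := by rw [hv]; abel
    have hinner : (inner ℝ (g x) (xstar - x) : ℝ) = -P := by
      rw [hneg, inner_neg_right, hP, PiLp.inner_apply]
      simp [RCLike.inner_apply, mul_comm]
    have hn : ‖xstar - x‖ ^ 2 = nv := by
      rw [hneg, norm_neg, hnormsq, hnv]
    rw [hinner, hn] at this
    linarith
  -- (2) Γ nv ≥ S
  have h2 : S ≤ Γ * nv := by
    rw [hS, hnv, Finset.mul_sum]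
    refine Finset.sum_le_sum fun i _ => ?_
    have := (hD i).2
    nlinarith [sq_nonneg (v i)]
  -- (3) Q ≤ α⁻¹ N
  have h3 : Q ≤ α⁻¹ * N := by
    rw [hQ, hN, Finset.mul_sum]
    refine Finset.sum_le_sum fun i _ => ?_
    have h := (hD i).1
    have : (D i)⁻¹ ≤ α⁻¹ := by
      apply inv_anti₀ hα h
    nlinarith [sq_nonneg (g x i)]
  -- (4) N ≤ 2 L Δ
  have h4 : N ≤ 2 * L * (f x - f xstar) := by
    have hm := hsm (x - L⁻¹ • g x) x
    have hmin' := hmin (x - L⁻¹ • g x)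
    have hsub : x - L⁻¹ • g x - x = -(L⁻¹ • g x) := by abel
    rw [hsub] at hm
    have hinner : (inner ℝ (g x) (-(L⁻¹ • g x)) : ℝ) = -(L⁻¹ * N) := by
      rw [inner_neg_right, real_inner_smul_right, real_inner_self_eq_norm_sq, hnormsq, hN]
    have hnorm : ‖-(L⁻¹ • g x)‖ ^ 2 = L⁻¹^2 * N := by
      rw [norm_neg, norm_smul, mul_pow, hnormsq, hN]
      simp [sq_abs]
    rw [hinner, hnorm] at hm
    have hL' : L ≠ 0 := hL.ne'
    have : f xstar ≤ f x - N / (2*L) := by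
      calc f xstar ≤ f (x - L⁻¹ • g x) := hmin'
        _ ≤ f x + -(L⁻¹ * N) + L / 2 * (L⁻¹^2 * N) := hm
        _ = f x - N / (2*L) := by field_simp; ring
    have hN2 : 0 ≤ N := Finset.sum_nonneg fun i _ => sq_nonneg _
    have h5 : N / (2*L) ≤ f x - f xstar := by linarith
    rw [div_le_iff₀ (by positivity : (0:ℝ) < 2*L)] at h5
    linarith
  have hNα : 0 ≤ N := Finset.sum_nonneg fun i _ => sq_nonneg _
  clear_value v S P N Q nv
  -- key steps
  have hγL : γ * L ≤ α / 4 := by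
    rw [le_div_iff₀ (by positivity : (0:ℝ) < 4*L)] at hγ
    linarith
  have key1 : γ * μ / Γ * S ≤ γ * μ * nv := by
    calc γ * μ / Γ * S ≤ γ * μ / Γ * (Γ * nv) := by
          apply mul_le_mul_of_nonneg_left h2 (by positivity)
      _ = γ * μ * nv := by field_simp
  have key2 : γ^2 * Q ≤ γ/2 * (f x - f xstar) := by
    have s1 : γ^2 * Q ≤ γ^2 * (α⁻¹ * N) :=
      mul_le_mul_of_nonneg_left h3 (by positivity)
    have s2 : γ^2 * (α⁻¹ * N) ≤ γ^2 * (α⁻¹ * (2 * L * (f x - f xstar))) := by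
      apply mul_le_mul_of_nonneg_left _ (by positivity)
      apply mul_le_mul_of_nonneg_left h4 (by positivity)
    have s3 : γ^2 * (α⁻¹ * (2 * L * (f x - f xstar))) ≤ γ/2 * (f x - f xstar) := by
      have hco : γ^2 * α⁻¹ * (2*L) ≤ γ/2 := by
        rw [show γ^2 * α⁻¹ * (2*L) = 2*γ*(γ*L)/α by ring, div_le_iff₀ hα]
        nlinarith [hγL, hγ0.le]
      calc γ^2 * (α⁻¹ * (2 * L * (f x - f xstar)))
          = γ^2 * α⁻¹ * (2*L) * (f x - f xstar) := by ring
        _ ≤ γ/2 * (f x - f xstar) := mul_le_mul_of_nonneg_right hco hΔ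
    linarith
  have key3 : 2 * γ * (f x - f xstar) + γ * μ * nv ≤ 2 * γ * P := by
    have h := mul_le_mul_of_nonneg_left h1 (by positivity : (0:ℝ) ≤ 2 * γ)
    calc 2 * γ * (f x - f xstar) + γ * μ * nv
        = 2 * γ * (f x - f xstar + μ/2 * nv) := by ring
      _ ≤ 2 * γ * P := h
  have hγΔ : 0 ≤ γ * (f x - f xstar) := mul_nonneg hγ0.le hΔ
  linarith [key1, key2, key3, hγΔ]
end
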